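/- arXiv:2510.04042 — 3 statements merged into one kernel-verified Lean document; each statement's English description precedes it below -/
import Mathlib

section
/- Let the trawl set be A = {(s,y) ∈ ℝ² : s < 0, 0 < y < a(s)} with trawl function a : (−∞,0] → ℝ⁺ integrable, and A_h = A + (h,0). Then for h ≥ 0, Leb(A ∩ A_h) = ∫_{−∞}^{−h} a(s) ds, so the autocorrelation ρ(h) = Leb(A ∩ A_h)/Leb(A) equals 1 − (∫_{−h}^0 a(s) ds)/(∫_{−∞}^0 a(s) ds). -/
open MeasureTheory

/-- Let the trawl set be `A = {(s,y) : s < 0, 0 < y < a(s)}` with trawl function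
`a : (−∞,0] → ℝ⁺` measurable, increasing and integrable, and let `A_h = A + (h,0)`.
Then for `h ≥ 0`, `Leb(A ∩ A_h) = ∫_{−∞}^{−h} a(s) ds`, so the autocorrelation
`ρ(h) = Leb(A ∩ A_h)/Leb(A)` equals `1 − (∫_{−h}^0 a)/(∫_{−∞}^0 a)`. -/
theorem stmt_5 (a : ℝ → ℝ) (ha_meas : Measurable a)
    (ha_pos : ∀ s ≤ (0 : ℝ), 0 < a s) (ha_mono : MonotoneOn a (Set.Iic (0 : ℝ)))
    (ha_int : IntegrableOn a (Set.Iic (0 : ℝ)))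
    (h : ℝ) (hh : 0 ≤ h)
    (A : Set (ℝ × ℝ)) (hA : A = {p : ℝ × ℝ | p.1 < 0 ∧ 0 < p.2 ∧ p.2 < a p.1})
    (Ah : Set (ℝ × ℝ)) (hAh : Ah = (fun p : ℝ × ℝ => (p.1 + h, p.2)) '' A) :
    volume (A ∩ Ah) = ENNReal.ofReal (∫ s in Set.Iic (-h), a s) ∧
    (volume (A ∩ Ah)).toReal / (volume A).toReal
      = 1 - (∫ s in Set.Icc (-h) 0, a s) / (∫ s in Set.Iic (0 : ℝ), a s) := by
  -- translation machinery
  have hmp : MeasurePreserving (fun x : ℝ => x - h) volume volume :=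
    measurePreserving_sub_right volume h
  have hemb : MeasurableEmbedding (fun x : ℝ => x - h) :=
    (MeasurableEquiv.subRight h).measurableEmbedding
  have hpre : (fun x : ℝ => x - h) ⁻¹' Set.Iic (-h) = Set.Iic 0 := by
    ext x; simp [sub_le_iff_le_add]
  have hint_h : IntegrableOn a (Set.Iic (-h)) :=
    ha_int.mono_set (Set.Iic_subset_Iic.mpr (by linarith))
  have hint_b : IntegrableOn (fun s => a (s - h)) (Set.Iio 0) := by
    have := (hmp.integrableOn_comp_preimage hemb (f := a) (s := Set.Iic (-h))).mpr hint_h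
    rw [hpre] at this
    exact this.mono_set Set.Iio_subset_Iic_self
  have hint_eq : ∫ s in Set.Iio 0, a (s - h) = ∫ s in Set.Iic (-h), a s := by
    rw [setIntegral_congr_set Iio_ae_eq_Iic, ← hpre,
      hmp.setIntegral_preimage_emb hemb a (Set.Iic (-h))]
  -- describe A ∩ Ah as a region between graphs
  have hinter : A ∩ Ah
      = regionBetween (fun _ => (0 : ℝ)) (fun s => a (s - h)) (Set.Iio 0) := by
    ext p
    simp only [hA, hAh, regionBetween, Set.mem_inter_iff, Set.mem_setOf_eq, Set.mem_image,
      Set.mem_Iio, Set.mem_Ioo, Prod.ext_iff]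
    constructor
    · rintro ⟨⟨h1, h2, _⟩, q, ⟨_, _, hq3⟩, hqa, hqb⟩
      refine ⟨h1, h2, ?_⟩
      have hq : q.1 = p.1 - h := by linarith
      rw [hqb, hq] at hq3; exact hq3
    · rintro ⟨h1, h2, h3⟩
      have hle : a (p.1 - h) ≤ a p.1 :=
        ha_mono (by simp; linarith) (by simp; linarith) (by linarith)
      exact ⟨⟨h1, h2, lt_of_lt_of_le h3 hle⟩, (p.1 - h, p.2),
        ⟨show p.1 - h < 0 by linarith, h2, h3⟩, by ring, rfl⟩
  have key : volume (A ∩ Ah) = ENNReal.ofReal (∫ s in Set.Iic (-h), a s) := by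
    rw [hinter, Measure.volume_eq_prod,
      volume_regionBetween_eq_integral integrableOn_zero
        hint_b measurableSet_Iio
        (fun x hx => (ha_pos _ (by simp at hx; linarith)).le)]
    simp only [Pi.sub_apply, sub_zero]
    rw [hint_eq]
  -- volume of A itself
  have hA0 : A = regionBetween (fun _ => (0 : ℝ)) a (Set.Iio 0) := by
    ext p
    simp only [hA, regionBetween, Set.mem_setOf_eq, Set.mem_Iio, Set.mem_Ioo]
  have keyA : volume A = ENNReal.ofReal (∫ s in Set.Iic 0, a s) := by
    rw [hA0, Measure.volume_eq_prod,
      volume_regionBetween_eq_integral integrableOn_zero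
        (ha_int.mono_set Set.Iio_subset_Iic_self) measurableSet_Iio
        (fun x hx => (ha_pos _ (le_of_lt hx)).le)]
    simp only [Pi.sub_apply, sub_zero]
    rw [setIntegral_congr_set Iio_ae_eq_Iic]
  refine ⟨key, ?_⟩
  -- arithmetic
  set I := ∫ s in Set.Iic (0:ℝ), a s with hI
  set J := ∫ s in Set.Iic (-h), a s with hJ
  set K := ∫ s in Set.Icc (-h) 0, a s with hK
  have hnn : ∀ s ∈ Set.Iic (0:ℝ), 0 ≤ a s := fun s hs => (ha_pos s hs).le
  have hJnn : 0 ≤ J := setIntegral_nonneg measurableSet_Iic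
    (fun s hs => (ha_pos s (by simp at hs ⊢; linarith)).le)
  have hsplit : I = J + K := by
    have h1 : Set.Iic (0:ℝ) = Set.Iic (-h) ∪ Set.Ioc (-h) 0 :=
      (Set.Iic_union_Ioc_eq_Iic (by linarith)).symm
    have h2 : ∫ s in Set.Ioc (-h) 0, a s = K := setIntegral_congr_set Ioc_ae_eq_Icc
    rw [hI, h1, setIntegral_union (Set.Iic_disjoint_Ioc le_rfl) measurableSet_Ioc
      hint_h (ha_int.mono_set Set.Ioc_subset_Iic_self), h2]
  have hIpos : 0 < I := by
    have hsub : Set.Icc (-1 : ℝ) 0 ⊆ Set.Iic 0 := Set.Icc_subset_Iic_self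
    have h1 : a (-1) * 1 ≤ ∫ s in Set.Icc (-1:ℝ) 0, a s := by
      have := setIntegral_mono_on (integrableOn_const (C := a (-1)) (s := Set.Icc (-1:ℝ) 0) (μ := volume) (by simp))
        (ha_int.mono_set hsub) measurableSet_Icc
        (fun s hs => ha_mono (by simp) (hsub hs) hs.1)
      simpa [Real.volume_Icc] using this
    have h2 : ∫ s in Set.Icc (-1:ℝ) 0, a s ≤ I := by
      have h3 : Set.Iic (0:ℝ) = Set.Iic (-1) ∪ Set.Ioc (-1) 0 :=
        (Set.Iic_union_Ioc_eq_Iic (by linarith)).symm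
      have h4 : ∫ s in Set.Ioc (-1:ℝ) 0, a s = ∫ s in Set.Icc (-1:ℝ) 0, a s :=
        setIntegral_congr_set Ioc_ae_eq_Icc
      rw [hI, h3, setIntegral_union (Set.Iic_disjoint_Ioc le_rfl) measurableSet_Ioc
        (ha_int.mono_set (Set.Iic_subset_Iic.mpr (by linarith)))
        (ha_int.mono_set Set.Ioc_subset_Iic_self), h4]
      have : 0 ≤ ∫ s in Set.Iic (-1:ℝ), a s := setIntegral_nonneg measurableSet_Iic
        (fun s hs => (ha_pos s (by simp at hs ⊢; linarith)).le)
      linarith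
    have := ha_pos (-1) (by linarith)
    linarith
  rw [key, keyA, ENNReal.toReal_ofReal hJnn, ENNReal.toReal_ofReal hIpos.le]
  rw [eq_sub_iff_add_eq]
  field_simp
  linarith [hsplit]
end

section
/- For the Inverse Gaussian trawl function a(s) = (1 − 2s/γ²)^{−1/2} exp(η(1 − √(1 − 2s/γ²))) for s ≤ 0 with γ, η > 0, the autocorrelation function is ρ(h) = exp(η(1 − √(1 + 2h/γ²))) for h ≥ 0. -/
open MeasureTheory

lemma key_integral (γ η c : ℝ) (hγ : 0 < γ) (hη : 0 < η) (hc : 0 ≤ c) :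
    (∫ s in Set.Iic (-c),
        Real.exp (η * (1 - Real.sqrt (1 - 2 * s / γ ^ 2))) / Real.sqrt (1 - 2 * s / γ ^ 2))
      = γ ^ 2 / η * Real.exp (η * (1 - Real.sqrt (1 + 2 * c / γ ^ 2))) := by
  have hγ2 : (0:ℝ) < γ ^ 2 := by positivity
  set G : ℝ → ℝ := fun x => -(γ ^ 2 / η) * Real.exp (η * (1 - Real.sqrt (1 + 2 * x / γ ^ 2)))
    with hG
  set g' : ℝ → ℝ := fun x =>
    Real.exp (η * (1 - Real.sqrt (1 + 2 * x / γ ^ 2))) / Real.sqrt (1 + 2 * x / γ ^ 2) with hg'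
  have hu : ∀ x ∈ Set.Ici c, (1:ℝ) ≤ 1 + 2 * x / γ ^ 2 := by
    intro x hx
    have : (0:ℝ) ≤ 2 * x / γ ^ 2 := by
      have hx0 : 0 ≤ x := le_trans hc hx
      positivity
    linarith
  have hderiv : ∀ x ∈ Set.Ici c, HasDerivAt G (g' x) x := by
    intro x hx
    have hu1 := hu x hx
    have hupos : (0:ℝ) < 1 + 2 * x / γ ^ 2 := lt_of_lt_of_le one_pos hu1
    have hsq : (0:ℝ) < Real.sqrt (1 + 2 * x / γ ^ 2) := Real.sqrt_pos.mpr hupos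
    have h1 : HasDerivAt (fun x : ℝ => 1 + 2 * x / γ ^ 2) (2 / γ ^ 2) x := by
      simpa using (((hasDerivAt_id x).const_mul (2:ℝ)).div_const (γ ^ 2)).const_add 1
    have h2 := h1.sqrt (ne_of_gt hupos)
    have h3 := (((hasDerivAt_const x (1:ℝ)).sub h2).const_mul η).exp.const_mul (-(γ ^ 2 / η))
    have hγ0 : γ ≠ 0 := hγ.ne'
    have hη0 : η ≠ 0 := hη.ne'
    have heq : ∀ S E : ℝ, S ≠ 0 →
        -(γ ^ 2 / η) * (E * (η * (0 - 2 / γ ^ 2 / (2 * S)))) = E / S := by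
      intro S E hS0
      field_simp
      ring
    have h4 := heq (Real.sqrt (1 + 2 * x / γ ^ 2))
      (Real.exp (η * (1 - Real.sqrt (1 + 2 * x / γ ^ 2)))) hsq.ne'
    rw [hg']
    beta_reduce
    exact h4 ▸ h3
  have hnonneg : ∀ x ∈ Set.Ioi c, 0 ≤ g' x := by
    intro x hx
    have := Real.sqrt_nonneg (1 + 2 * x / γ ^ 2)
    positivity
  have htends : Filter.Tendsto G Filter.atTop (nhds 0) := by
    have t1 : Filter.Tendsto (fun x : ℝ => 1 + 2 * x / γ ^ 2) Filter.atTop Filter.atTop := by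
      apply Filter.tendsto_atTop_add_const_left
      exact Filter.Tendsto.atTop_div_const hγ2 (Filter.tendsto_id.const_mul_atTop two_pos)
    have tsqrt : Filter.Tendsto Real.sqrt Filter.atTop Filter.atTop := by
      apply Filter.tendsto_atTop_atTop.mpr
      intro b
      refine ⟨b ^ 2, fun a ha => ?_⟩
      calc b ≤ |b| := le_abs_self b
        _ = Real.sqrt (b ^ 2) := (Real.sqrt_sq_eq_abs b).symm
        _ ≤ Real.sqrt a := Real.sqrt_le_sqrt ha
    have t2 : Filter.Tendsto (fun x : ℝ => Real.sqrt (1 + 2 * x / γ ^ 2))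
        Filter.atTop Filter.atTop := tsqrt.comp t1
    have t3 : Filter.Tendsto (fun x : ℝ => η * (1 - Real.sqrt (1 + 2 * x / γ ^ 2)))
        Filter.atTop Filter.atBot := by
      apply Filter.Tendsto.const_mul_atBot hη
      have tneg : Filter.Tendsto (fun x : ℝ => -Real.sqrt (1 + 2 * x / γ ^ 2))
          Filter.atTop Filter.atBot := Filter.tendsto_neg_atBot_iff.mpr t2
      have := Filter.tendsto_atBot_add_const_left Filter.atTop 1 tneg
      simpa [sub_eq_add_neg] using this
    have t4 := Real.tendsto_exp_atBot.comp t3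
    have := t4.const_mul (-(γ ^ 2 / η))
    rw [mul_zero] at this
    simpa [hG, Function.comp_def, neg_mul] using this
  have hInt : (∫ x in Set.Ioi c, g' x) = 0 - G c :=
    integral_Ioi_of_hasDerivAt_of_nonneg' hderiv hnonneg htends
  have hrefl : (∫ s in Set.Iic (-c),
      Real.exp (η * (1 - Real.sqrt (1 - 2 * s / γ ^ 2))) / Real.sqrt (1 - 2 * s / γ ^ 2))
      = ∫ x in Set.Ioi c, g' x := by
    rw [← integral_comp_neg_Ioi]
    congr 1
    ext x
    rw [hg']
    norm_num
    ring_nf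
  rw [hrefl, hInt, hG]
  ring

/-- For the Inverse Gaussian trawl function
`a(s) = (1 − 2s/γ²)^{−1/2} exp(η (1 − √(1 − 2s/γ²)))`, `s ≤ 0`, with `γ, η > 0`,
the autocorrelation function `ρ(h) = (∫_{−∞}^{−h} a)/(∫_{−∞}^0 a)` equals
`exp(η (1 − √(1 + 2h/γ²)))` for `h ≥ 0`. -/
theorem stmt_7 (γ η : ℝ) (hγ : 0 < γ) (hη : 0 < η) (h : ℝ) (hh : 0 ≤ h) :
    (∫ s in Set.Iic (-h),
        Real.exp (η * (1 - Real.sqrt (1 - 2 * s / γ ^ 2))) / Real.sqrt (1 - 2 * s / γ ^ 2))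
      / (∫ s in Set.Iic (0 : ℝ),
        Real.exp (η * (1 - Real.sqrt (1 - 2 * s / γ ^ 2))) / Real.sqrt (1 - 2 * s / γ ^ 2))
      = Real.exp (η * (1 - Real.sqrt (1 + 2 * h / γ ^ 2))) := by
  have h1 := key_integral γ η h hγ hη hh
  have h2 := key_integral γ η 0 hγ hη le_rfl
  rw [neg_zero] at h2
  rw [h1, h2]
  norm_num
  field_simp
end

section
/- Let θ ~ p(θ), x | θ ~ p(x|θ), and suppose the posterior p(·|x) is known exactly. Define the rank statistic r(θ) = E_{ϑ ~ p(·|x)}[1(f(θ) < f(ϑ))] for a measurable f : Θ → ℝ such that f(ϑ) has a continuous distribution under the posterior for almost every x. Then r(θ) is uniformly distributed on [0,1] under the joint law p(x,θ). -/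
open MeasureTheory ProbabilityTheory

/-- Probability integral transform (survival-function form) for an atomless
probability measure on `ℝ`. -/
lemma pit_aux (μ : Measure ℝ) [IsProbabilityMeasure μ] (hatom : ∀ t : ℝ, μ {t} = 0)
    {u : ℝ} (hu0 : 0 ≤ u) (hu1 : u ≤ 1) :
    μ {t | (μ (Set.Ioi t)).toReal ≤ u} = ENNReal.ofReal u := by
  set v : ENNReal := ENNReal.ofReal u with hv
  have hset : {t : ℝ | (μ (Set.Ioi t)).toReal ≤ u} = {t : ℝ | μ (Set.Ioi t) ≤ v} := by
    ext t
    simp only [Set.mem_setOf_eq, hv]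
    rw [ENNReal.le_ofReal_iff_toReal_le (measure_ne_top μ _) hu0]
  rw [hset]
  set A : Set ℝ := {t : ℝ | μ (Set.Ioi t) ≤ v} with hA
  have hGanti : ∀ ⦃s t : ℝ⦄, s ≤ t → μ (Set.Ioi t) ≤ μ (Set.Ioi s) :=
    fun s t h => measure_mono (Set.Ioi_subset_Ioi h)
  have hupper : ∀ ⦃s t : ℝ⦄, s ∈ A → s ≤ t → t ∈ A :=
    fun s t hs hst => le_trans (hGanti hst) hs
  -- case u = 1
  rcases eq_or_lt_of_le hu1 with h1 | h1
  · subst h1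
    have hAuniv : A = Set.univ := by
      apply Set.eq_univ_of_forall
      intro t
      show μ (Set.Ioi t) ≤ v
      rw [hv, ENNReal.ofReal_one]
      exact prob_le_one
    rw [hAuniv, measure_univ, hv, ENNReal.ofReal_one]
  have hv1 : v < 1 := by
    rw [hv]
    calc ENNReal.ofReal u < ENNReal.ofReal 1 := by
            exact (ENNReal.ofReal_lt_ofReal_iff one_pos).2 h1
      _ = 1 := ENNReal.ofReal_one
  -- a point where the survival function exceeds v
  have htendsBot : Filter.Tendsto (μ ∘ fun t : ℝ => Set.Ioi t) Filter.atBot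
      (nhds (μ (⋃ t : ℝ, Set.Ioi t))) :=
    tendsto_measure_iUnion_atBot (fun s t h => Set.Ioi_subset_Ioi h)
  have hunion : (⋃ t : ℝ, Set.Ioi t) = Set.univ := by
    apply Set.eq_univ_of_forall
    intro x
    exact Set.mem_iUnion.2 ⟨x - 1, by simp⟩
  rw [hunion, measure_univ] at htendsBot
  obtain ⟨t₀, ht₀⟩ : ∃ t₀ : ℝ, v < μ (Set.Ioi t₀) :=
    (htendsBot.eventually_const_lt hv1).exists
  -- A is either empty or bounded below
  rcases Set.eq_empty_or_nonempty A with hAe | hAne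
  · -- then v = 0
    have hall : ∀ t : ℝ, v ≤ μ (Set.Ioi t) := by
      intro t
      by_contra h
      have ht : μ (Set.Ioi t) ≤ v := le_of_lt (not_le.1 h)
      exact Set.eq_empty_iff_forall_notMem.1 hAe t ht
    have htendsTop : Filter.Tendsto (μ ∘ fun t : ℝ => Set.Ioi t) Filter.atTop
        (nhds (μ (⋂ t : ℝ, Set.Ioi t))) := by
      refine tendsto_measure_iInter_atTop (fun t => measurableSet_Ioi.nullMeasurableSet)
        (fun s t h => Set.Ioi_subset_Ioi h) ⟨0, measure_ne_top μ _⟩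
    have hinter : (⋂ t : ℝ, Set.Ioi t) = (∅ : Set ℝ) := by
      ext x
      simp only [Set.mem_iInter, Set.mem_Ioi, Set.mem_empty_iff_false, iff_false, not_forall,
        not_lt]
      exact ⟨x, le_rfl⟩
    rw [hinter, measure_empty] at htendsTop
    have hv0 : v ≤ 0 := ge_of_tendsto htendsTop (Filter.Eventually.of_forall fun t => hall t)
    rw [hAe, measure_empty, le_zero_iff.1 hv0]
  · have hbdd : BddBelow A := by
      refine ⟨t₀, fun t ht => ?_⟩
      by_contra h
      exact absurd (le_trans (hGanti (le_of_not_ge h)) ht) (not_le.2 ht₀)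
    set a : ℝ := sInf A with ha
    have h1sub : Set.Ioi a ⊆ A := by
      intro t ht
      obtain ⟨s, hsA, hst⟩ := Real.lt_sInf_add_pos hAne (sub_pos.2 ht)
      rw [← ha] at hst
      exact hupper hsA (by linarith)
    have h2sub : A ⊆ Set.Ici a := fun t ht => csInf_le hbdd ht
    -- μ (Ici a) ≤ μ (Ioi a) since {a} is null
    have hIci : μ (Set.Ici a) ≤ μ (Set.Ioi a) := by
      rw [← Set.Ioi_insert]
      calc μ (insert a (Set.Ioi a)) ≤ μ {a} + μ (Set.Ioi a) := by
            rw [← Set.singleton_union]; exact measure_union_le _ _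
        _ = μ (Set.Ioi a) := by rw [hatom a, zero_add]
    have hμA : μ A = μ (Set.Ioi a) :=
      le_antisymm (le_trans (measure_mono h2sub) hIci) (measure_mono h1sub)
    rw [hμA]
    -- show μ (Ioi a) = v
    apply le_antisymm
    · -- Ioi a = ⋃ n, Ioi (a + 1/(n+1))
      have hU : Set.Ioi a = ⋃ n : ℕ, Set.Ioi (a + 1 / (n + 1)) := by
        ext x
        simp only [Set.mem_Ioi, Set.mem_iUnion]
        constructor
        · intro hx
          obtain ⟨n, hn⟩ := exists_nat_one_div_lt (sub_pos.2 hx)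
          exact ⟨n, by linarith⟩
        · rintro ⟨n, hn⟩
          have : (0:ℝ) < 1 / (n + 1) := by positivity
          linarith
      have hmono : Monotone fun n : ℕ => Set.Ioi (a + 1 / ((n:ℝ) + 1)) := by
        intro n m hnm
        apply Set.Ioi_subset_Ioi
        have h1 : (0:ℝ) < (n:ℝ) + 1 := by positivity
        have h2 : (n:ℝ) + 1 ≤ (m:ℝ) + 1 := by
          have := (Nat.cast_le (α := ℝ)).2 hnm; linarith
        have := one_div_le_one_div_of_le h1 h2
        linarith
      rw [hU, hmono.measure_iUnion]
      apply iSup_le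
      intro n
      apply h1sub
      have : (0:ℝ) < 1 / ((n:ℝ) + 1) := by positivity
      simpa using this
    · -- v ≤ μ (Ici a) = μ (Ioi a)
      refine le_trans ?_ hIci
      have hI : Set.Ici a = ⋂ n : ℕ, Set.Ioi (a - 1 / (n + 1)) := by
        ext x
        simp only [Set.mem_Ici, Set.mem_iInter, Set.mem_Ioi]
        constructor
        · intro hx n
          have : (0:ℝ) < 1 / ((n:ℝ) + 1) := by positivity
          linarith
        · intro h
          by_contra hlt
          obtain ⟨n, hn⟩ := exists_nat_one_div_lt (sub_pos.2 (not_le.1 hlt))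
          have := h n
          linarith
      have hanti : Antitone fun n : ℕ => Set.Ioi (a - 1 / ((n:ℝ) + 1)) := by
        intro n m hnm
        apply Set.Ioi_subset_Ioi
        have h1 : (0:ℝ) < (n:ℝ) + 1 := by positivity
        have h2 : (n:ℝ) + 1 ≤ (m:ℝ) + 1 := by
          have := (Nat.cast_le (α := ℝ)).2 hnm; linarith
        have := one_div_le_one_div_of_le h1 h2
        linarith
      rw [hI, hanti.measure_iInter (fun n => measurableSet_Ioi.nullMeasurableSet)
        ⟨0, measure_ne_top μ _⟩]
      apply le_iInf
      intro n
      -- a - 1/(n+1) < a so it is not in A, hence v < μ (Ioi (a - 1/(n+1)))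
      have hlt : a - 1 / ((n:ℝ) + 1) < a := by
        have : (0:ℝ) < 1 / ((n:ℝ) + 1) := by positivity
        linarith
      have hnotA : a - 1 / ((n:ℝ) + 1) ∉ A := fun h => absurd (h2sub h) (not_le.2 hlt)
      exact le_of_lt (not_le.1 hnotA)

/-- Let `θ ∼ p(θ)`, `x | θ ∼ p(x|θ)`, with exactly known posterior (given as a Markov
kernel disintegrating the joint law). Define the rank statistic
`r(x,θ) = P_{ϑ ∼ p(·|x)}(f(θ) < f(ϑ))` for measurable `f : Θ → ℝ` such that `f(ϑ)` has a
continuous (atomless) distribution under the posterior for almost every `x`. Then `r` is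
uniformly distributed on `[0,1]` under the joint law `p(x,θ)`:
`P(r ≤ u) = u` for every `u ∈ [0,1]`. -/
theorem stmt_10 {X Θ : Type*} [MeasurableSpace X] [MeasurableSpace Θ]
    (joint : Measure (X × Θ)) [IsProbabilityMeasure joint]
    (posterior : Kernel X Θ) [IsMarkovKernel posterior]
    (hdisint : joint = joint.fst ⊗ₘ posterior)
    (f : Θ → ℝ) (hf : Measurable f)
    (hcont : ∀ᵐ x ∂joint.fst, ∀ t : ℝ, posterior x {ϑ | f ϑ = t} = 0) :
    ∀ u ∈ Set.Icc (0 : ℝ) 1,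
      joint {z : X × Θ | ((posterior z.1) {ϑ | f z.2 < f ϑ}).toReal ≤ u}
        = ENNReal.ofReal u := by
  intro u hu
  obtain ⟨hu0, hu1⟩ := hu
  -- measurability of the rank statistic
  have hT : MeasurableSet {p : (X × Θ) × Θ | f p.1.2 < f p.2} :=
    measurableSet_lt (hf.comp (measurable_snd.comp measurable_fst)) (hf.comp measurable_snd)
  have hmeas : Measurable fun z : X × Θ => posterior z.1 {ϑ | f z.2 < f ϑ} := by
    have := Kernel.measurable_kernel_prodMk_left
      (κ := posterior.comap Prod.fst measurable_fst) hT
    simpa [Kernel.comap_apply, Set.preimage_setOf_eq] using this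
  have hS : MeasurableSet {z : X × Θ | ((posterior z.1) {ϑ | f z.2 < f ϑ}).toReal ≤ u} :=
    measurableSet_le (ENNReal.measurable_toReal.comp hmeas) measurable_const
  rw [hdisint, Measure.compProd_apply hS]
  have hae : ∀ᵐ x ∂joint.fst,
      posterior x (Prod.mk x ⁻¹' {z : X × Θ | ((posterior z.1) {ϑ | f z.2 < f ϑ}).toReal ≤ u})
        = ENNReal.ofReal u := by
    filter_upwards [hcont] with x hx
    set ν : Measure ℝ := (posterior x).map f with hν
    have : IsProbabilityMeasure ν := Measure.isProbabilityMeasure_map hf.aemeasurable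
    have hatom : ∀ t : ℝ, ν {t} = 0 := by
      intro t
      rw [hν, Measure.map_apply hf (measurableSet_singleton t)]
      exact hx t
    have hGB : Measurable fun t : ℝ => ν (Set.Ioi t) :=
      Antitone.measurable (fun s t h => measure_mono (Set.Ioi_subset_Ioi h))
    have hBset : MeasurableSet {t : ℝ | (ν (Set.Ioi t)).toReal ≤ u} :=
      measurableSet_le (ENNReal.measurable_toReal.comp hGB) measurable_const
    have hpre : Prod.mk x ⁻¹'
        {z : X × Θ | ((posterior z.1) {ϑ | f z.2 < f ϑ}).toReal ≤ u}
        = f ⁻¹' {t : ℝ | (ν (Set.Ioi t)).toReal ≤ u} := by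
      ext θ
      simp only [Set.mem_preimage, Set.mem_setOf_eq]
      have : posterior x {ϑ | f θ < f ϑ} = ν (Set.Ioi (f θ)) := by
        rw [hν, Measure.map_apply hf measurableSet_Ioi]
        rfl
      rw [this]
    rw [hpre, ← Measure.map_apply hf hBset, ← hν]
    exact pit_aux ν hatom hu0 hu1
  rw [lintegral_congr_ae hae, lintegral_const, measure_univ, mul_one]
end
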